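/- Let n be a positive integer, A an n × n integer matrix, M(x) = adj(x•I − A), v = (1, 2, …, n)ᵀ, and p_i(x) = Σ_{k=0}^{n−1} M(x)_{i k} · (k+1). For all indices i < j, the difference p_j − p_i is a polynomial of degree n − 1 with leading coefficient j − i > 0; consequently there exists x₀ such that p_j(x) > p_i(x) for all integers x > x₀. -/
import Mathlib


open Polynomial
open Matrix


lemma charmatrix_submatrix_diag {m : ℕ} (A : Matrix (Fin (m+1)) (Fin (m+1)) ℤ) (k : Fin (m+1)) :
    (charmatrix A).submatrix k.succAbove k.succAbove
      = charmatrix (A.submatrix k.succAbove k.succAbove) := by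
  ext a b
  by_cases h : a = b
  · subst h; simp [charmatrix_apply]
  · have h2 : k.succAbove a ≠ k.succAbove b := fun hh => h (Fin.succAbove_right_injective hh)
    simp [charmatrix_apply, Matrix.diagonal_apply_ne _ h, Matrix.diagonal_apply_ne _ h2]

lemma adj_charmatrix_diag {m : ℕ} (A : Matrix (Fin (m+1)) (Fin (m+1)) ℤ) (k : Fin (m+1)) :
    (charmatrix A).adjugate k k = (A.submatrix k.succAbove k.succAbove).charpoly := by
  rw [Matrix.adjugate_fin_succ_eq_det_submatrix, charmatrix_submatrix_diag]
  rw [Even.neg_one_pow ⟨k, rfl⟩, one_mul, Matrix.charpoly]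

lemma adj_charmatrix_offdiag_natDegree_lt {m : ℕ} (A : Matrix (Fin (m+1)) (Fin (m+1)) ℤ)
    (i k : Fin (m+1)) (h : i ≠ k) :
    ((charmatrix A).adjugate i k).natDegree < m := by
  obtain ⟨b₀, hb₀⟩ := Fin.exists_succAbove_eq (show k ≠ i from h.symm)
  have hm : 0 < m := b₀.pos
  rw [Matrix.adjugate_fin_succ_eq_det_submatrix]
  refine lt_of_le_of_lt (Polynomial.natDegree_mul_le.trans ?_) (Nat.sub_lt hm one_pos)
  have hpow : ((-1 : ℤ[X]) ^ (↑k + ↑i : ℕ)).natDegree = 0 := by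
    rcases Int.even_or_odd (↑k + ↑i : ℕ) with hh | hh
    · rw [(Int.even_coe_nat _).mp hh |>.neg_one_pow]; simp
    · rw [(Int.odd_coe_nat _).mp hh |>.neg_one_pow]; simp
  rw [hpow, zero_add, Matrix.det_apply']
  apply Polynomial.natDegree_sum_le_of_forall_le
  intro σ _
  refine Polynomial.natDegree_mul_le.trans ?_
  rw [Polynomial.natDegree_intCast, zero_add]
  refine (Polynomial.natDegree_prod_le _ _).trans ?_
  calc ∑ b : Fin m, ((charmatrix A).submatrix k.succAbove i.succAbove (σ b) b).natDegree
      ≤ ∑ b : Fin m, (if k.succAbove (σ b) = i.succAbove b then 1 else 0) := by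
        refine Finset.sum_le_sum fun b _ => ?_
        by_cases hb : k.succAbove (σ b) = i.succAbove b
        · simp only [hb, if_pos, Matrix.submatrix_apply, charmatrix_apply]
          rw [Matrix.diagonal_apply_eq]
          compute_degree
        · simp only [hb, if_neg, Matrix.submatrix_apply, charmatrix_apply,
            Matrix.diagonal_apply_ne _ hb]
          simp
    _ = (Finset.univ.filter (fun b : Fin m => k.succAbove (σ b) = i.succAbove b)).card := by
        simp [Finset.sum_boole]
    _ ≤ (Finset.univ.erase b₀).card := by
        refine Finset.card_le_card fun b hb => ?_
        rw [Finset.mem_filter] at hb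
        refine Finset.mem_erase.mpr ⟨fun hbb => ?_, Finset.mem_univ _⟩
        subst hbb
        exact Fin.succAbove_ne k (σ b) (hb.2.trans hb₀)
    _ = m - 1 := by rw [Finset.card_erase_of_mem (Finset.mem_univ _), Finset.card_univ,
        Fintype.card_fin]

/-- A polynomial over ℤ with positive leading coefficient is eventually positive. -/
lemma int_poly_eventually_pos (q : ℤ[X]) (h : 0 < q.leadingCoeff) :
    ∃ x₀ : ℤ, ∀ x : ℤ, x₀ < x → 0 < q.eval x := by
  obtain ⟨d, hd⟩ : ∃ d, q.natDegree = d := ⟨_, rfl⟩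
  induction d generalizing q with
  | zero =>
    refine ⟨0, fun x _ => ?_⟩
    rw [Polynomial.eq_C_of_natDegree_eq_zero hd, eval_C]
    rwa [Polynomial.leadingCoeff, hd] at h
  | succ d ih =>
    have hq0 : q ≠ 0 := fun h0 => by simp [h0] at h
    have hdeg : q.divX.natDegree = d := by
      rw [Polynomial.natDegree_divX_eq_natDegree_tsub_one, hd]; omega
    have hlc : q.divX.leadingCoeff = q.leadingCoeff := by
      rw [Polynomial.leadingCoeff, Polynomial.leadingCoeff, hdeg, Polynomial.coeff_divX, hd]
    obtain ⟨x₀, hx₀⟩ := ih q.divX (by rwa [hlc]) hdeg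
    refine ⟨max x₀ |q.coeff 0|, fun x hx => ?_⟩
    have h1 : x₀ < x := lt_of_le_of_lt (le_max_left _ _) hx
    have h2 : |q.coeff 0| < x := lt_of_le_of_lt (le_max_right _ _) hx
    have h3 : 1 ≤ q.divX.eval x := hx₀ x h1
    have h4 : 0 < x := lt_of_le_of_lt (abs_nonneg _) h2
    have h5 : q.eval x = x * q.divX.eval x + q.coeff 0 := by
      conv_lhs => rw [← Polynomial.X_mul_divX_add q]
      simp [mul_comm]
    rw [h5]
    nlinarith [abs_le.mp (le_of_lt h2), neg_abs_le (q.coeff 0)]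

/-- With `p i = Σ_k adj(x•I − A)_{i k} * (k+1)`, for `i < j`
the difference `p j − p i` has degree `n − 1` and positive leading coefficient
`j − i`; consequently `p j (x) > p i (x)` for all sufficiently large `x`. -/
theorem adj_poly_diff (n : ℕ) (hn : 0 < n)
    (A : Matrix (Fin n) (Fin n) ℤ)
    (p : Fin n → ℤ[X])
    (hp : ∀ i, p i = ∑ k : Fin n,
      (((X : ℤ[X]) • (1 : Matrix (Fin n) (Fin n) ℤ[X]) - A.map C).adjugate i k)
        * C ((k : ℤ) + 1))
    (i j : Fin n) (hij : i < j) :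
    (p j - p i).natDegree = n - 1 ∧
    (p j - p i).leadingCoeff = (j : ℤ) - (i : ℤ) ∧
    (0 : ℤ) < (j : ℤ) - (i : ℤ) ∧
    ∃ x₀ : ℤ, ∀ x : ℤ, x₀ < x → (p i).eval x < (p j).eval x := by
  obtain ⟨m, rfl⟩ : ∃ m, n = m + 1 := ⟨n - 1, by omega⟩
  have hB : ((X : ℤ[X]) • (1 : Matrix (Fin (m+1)) (Fin (m+1)) ℤ[X]) - A.map C)
      = charmatrix A := by
    ext a b
    by_cases h : a = b <;>
      simp [Matrix.sub_apply, Matrix.smul_apply, Matrix.one_apply, charmatrix_apply,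
        Matrix.diagonal_apply, h, Matrix.map_apply]
  have hco : ∀ a k : Fin (m+1),
      ((charmatrix A).adjugate a k).coeff m = if a = k then 1 else 0 := by
    intro a k
    by_cases h : a = k
    · subst h
      rw [adj_charmatrix_diag, if_pos rfl]
      have hnd : (A.submatrix a.succAbove a.succAbove).charpoly.natDegree = m := by
        rw [Matrix.charpoly_natDegree_eq_dim, Fintype.card_fin]
      have hmc := (A.submatrix a.succAbove a.succAbove).charpoly_monic.coeff_natDegree
      rwa [hnd] at hmc
    · rw [if_neg h]
      exact Polynomial.coeff_eq_zero_of_natDegree_lt (adj_charmatrix_offdiag_natDegree_lt A a k h)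
  have hnd : ∀ a k : Fin (m+1), ((charmatrix A).adjugate a k).natDegree ≤ m := by
    intro a k
    by_cases h : a = k
    · subst h
      rw [adj_charmatrix_diag, Matrix.charpoly_natDegree_eq_dim, Fintype.card_fin]
    · exact le_of_lt (adj_charmatrix_offdiag_natDegree_lt A a k h)
  have hpj : ∀ a : Fin (m+1),
      p a = ∑ k : Fin (m+1), (charmatrix A).adjugate a k * C ((k:ℤ)+1) := by
    intro a; rw [hp a, hB]
  have hdegsum : ∀ a, (p a).natDegree ≤ m := by
    intro a
    rw [hpj a]
    refine Polynomial.natDegree_sum_le_of_forall_le _ _ fun k _ => ?_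
    refine Polynomial.natDegree_mul_le.trans ?_
    rw [Polynomial.natDegree_C]
    simpa using hnd a k
  have hdeg : (p j - p i).natDegree ≤ m :=
    (Polynomial.natDegree_sub_le _ _).trans (by simp [hdegsum])
  have hcoeffa : ∀ a : Fin (m+1), (p a).coeff m = (a:ℤ) + 1 := by
    intro a
    rw [hpj a, Polynomial.finset_sum_coeff,
      Finset.sum_congr rfl (fun k _ => by rw [Polynomial.coeff_mul_C, hco a k])]
    simp [ite_mul, Finset.sum_ite_eq]
  have hcoeff : (p j - p i).coeff m = (j:ℤ) - (i:ℤ) := by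
    rw [Polynomial.coeff_sub, hcoeffa, hcoeffa]; ring
  have hlt : (i:ℤ) < (j:ℤ) := by exact_mod_cast hij
  have hpos : (0:ℤ) < (j:ℤ) - (i:ℤ) := sub_pos.mpr hlt
  have hne : (p j - p i).coeff m ≠ 0 := by rw [hcoeff]; exact ne_of_gt hpos
  have hndeq : (p j - p i).natDegree = m :=
    Polynomial.natDegree_eq_of_le_of_coeff_ne_zero hdeg hne
  have hlc : (p j - p i).leadingCoeff = (j:ℤ) - (i:ℤ) := by
    rw [Polynomial.leadingCoeff, hndeq, hcoeff]
  refine ⟨by simp [hndeq], hlc, hpos, ?_⟩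
  obtain ⟨x₀, hx₀⟩ := int_poly_eventually_pos (p j - p i) (hlc ▸ hpos)
  refine ⟨x₀, fun x hx => ?_⟩
  have := hx₀ x hx
  rw [Polynomial.eval_sub] at this
  linarith
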